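/- Let k ≥ 3 be an integer, λ = 2^{1/k}, let a ≠ 0 be real, let B ∈ ℤ satisfy λ^{−B} ≤ |a| ≤ λ^{−B+1}, and set θ = B/k. Let φ₀ : ℝ → [0,1] be supported in { s : λ^{−1} ≤ |s| ≤ λ² }, and let Q : ℝ → ℝ be measurable with |Q(t)| ≤ 8 |a| |t|^k for all t in the support of every φ₀(·/λ^i) with integer i ≤ θ. Then for every locally integrable f and every x ∈ ℝ, Σ_{i ∈ ℤ, i ≤ θ} ∫_ℝ |f(x−t)| |Q(t)| φ₀(t/λ^i) dt/|t| ≤ 10⁴ Mf(x). -/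
import Mathlib


open MeasureTheory Complex
open scoped ENNReal NNReal

/-- The centered Hardy–Littlewood maximal function
`Mf(x) = sup_{r>0} (2r)⁻¹ ∫_{x-r}^{x+r} |f(y)| dy`, valued in `ℝ≥0∞`. -/
noncomputable def centeredMaximal (f : ℝ → ℂ) (x : ℝ) : ℝ≥0∞ :=
  ⨆ (r : ℝ) (_ : 0 < r),
    (ENNReal.ofReal (2 * r))⁻¹ * ∫⁻ y in Set.Icc (x - r) (x + r), (‖f y‖₊ : ℝ≥0∞)

/-- **Small scales error bound.** Let `k ≥ 3`, `λ = 2^{1/k}`, `a ≠ 0`, `B ∈ ℤ` with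
`λ^{-B} ≤ |a| ≤ λ^{-B+1}`, `θ = B/k`. If `φ₀ : ℝ → [0,1]` is supported in
`{λ⁻¹ ≤ |s| ≤ λ²}` and `|Q(t)| ≤ 8|a||t|^k` on the support of every `φ₀(·/λ^i)` with `i ≤ θ`,
then `Σ_{i ≤ θ} ∫ |f(x-t)| |Q(t)| φ₀(t/λ^i) dt/|t| ≤ 10⁴ Mf(x)`. -/
theorem statement9 (k : ℕ) (hk : 3 ≤ k) (lam : ℝ) (hlam : lam = (2 : ℝ) ^ ((k : ℝ)⁻¹))
    (a : ℝ) (ha : a ≠ 0) (B : ℤ) (hB : lam ^ (-B) ≤ |a| ∧ |a| ≤ lam ^ (-B + 1))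
    (θ : ℝ) (hθ : θ = (B : ℝ) / (k : ℝ))
    (φ₀ : ℝ → ℝ) (hφ₀01 : ∀ s, φ₀ s ∈ Set.Icc (0 : ℝ) 1)
    (hφ₀supp : Function.support φ₀ ⊆ {s : ℝ | lam⁻¹ ≤ |s| ∧ |s| ≤ lam ^ 2})
    (Q : ℝ → ℝ) (hQmeas : Measurable Q)
    (hQ : ∀ i : ℤ, (i : ℝ) ≤ θ → ∀ t : ℝ, φ₀ (t / lam ^ i) ≠ 0 → |Q t| ≤ 8 * |a| * |t| ^ k)
    (f : ℝ → ℂ) (hf : LocallyIntegrable f volume) (x : ℝ) :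
    (∑' i : ℤ,
        if (i : ℝ) ≤ θ then
          ∫⁻ t : ℝ, (‖f (x - t)‖₊ : ℝ≥0∞) * ENNReal.ofReal (|Q t|) *
            ENNReal.ofReal (φ₀ (t / lam ^ i)) * (ENNReal.ofReal |t|)⁻¹
        else 0)
      ≤ 10 ^ 4 * centeredMaximal f x := by
  have hk0 : (0:ℝ) < (k:ℝ) := by exact_mod_cast Nat.pos_of_ne_zero (by omega)
  have hlampos : (0:ℝ) < lam := by rw [hlam]; positivity
  have hlam1 : (1:ℝ) ≤ lam := by
    rw [hlam]; exact Real.one_le_rpow one_le_two (by positivity)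
  have hlam2 : lam ≤ 2 := by
    rw [hlam]
    calc (2:ℝ) ^ ((k:ℝ)⁻¹) ≤ (2:ℝ) ^ (1:ℝ) := by
          apply Real.rpow_le_rpow_of_exponent_le one_le_two
          rw [inv_le_one_iff₀]; right; exact_mod_cast Nat.one_le_iff_ne_zero.mpr (by omega)
      _ = 2 := Real.rpow_one 2
  have hzp : ∀ m : ℤ, lam ^ m = (2:ℝ) ^ ((m:ℝ)/(k:ℝ)) := by
    intro m
    rw [hlam, ← Real.rpow_intCast ((2:ℝ) ^ ((k:ℝ)⁻¹)) m, ← Real.rpow_mul (by norm_num)]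
    congr 1
    field_simp
  have hlamk : lam ^ 3 ≤ 2 := by
    calc lam ^ 3 ≤ lam ^ k := pow_le_pow_right₀ hlam1 hk
      _ = 2 := by
          rw [hlam, ← Real.rpow_natCast ((2:ℝ) ^ ((k:ℝ)⁻¹)) k, ← Real.rpow_mul (by norm_num)]
          rw [inv_mul_cancel₀ hk0.ne', Real.rpow_one]
  have key : ∀ i : ℤ, (i : ℝ) ≤ θ →
      (∫⁻ t : ℝ, (‖f (x - t)‖₊ : ℝ≥0∞) * ENNReal.ofReal (|Q t|) *
          ENNReal.ofReal (φ₀ (t / lam ^ i)) * (ENNReal.ofReal |t|)⁻¹)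
        ≤ ENNReal.ofReal ((2:ℝ) ^ ((i:ℝ) - θ)) * (ENNReal.ofReal 256 * centeredMaximal f x) := by
    intro i hi
    have hpi : (0:ℝ) < lam ^ i := zpow_pos hlampos i
    set r : ℝ := lam ^ (i + 2) with hrdef
    have hr : 0 < r := zpow_pos hlampos _
    have hr_eq : r = lam ^ i * lam ^ 2 := by
      rw [hrdef, zpow_add₀ hlampos.ne']
      norm_cast
    set p : ℝ := (2:ℝ) ^ ((i:ℝ) - θ) with hpdef
    have hp : 0 < p := Real.rpow_pos_of_pos two_pos _
    set D : ℝ := 64 * p * (lam / lam ^ i) with hDdef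
    have hD0 : 0 ≤ D := by positivity
    -- pointwise bound
    have hpt : ∀ t : ℝ, (‖f (x - t)‖₊ : ℝ≥0∞) * ENNReal.ofReal (|Q t|) *
        ENNReal.ofReal (φ₀ (t / lam ^ i)) * (ENNReal.ofReal |t|)⁻¹
        ≤ ENNReal.ofReal D *
          Set.indicator (Set.Icc (x - r) (x + r)) (fun y => (‖f y‖₊ : ℝ≥0∞)) (x - t) := by
      intro t
      by_cases hφ : φ₀ (t / lam ^ i) = 0
      · simp [hφ]
      · obtain ⟨h1, h2⟩ := hφ₀supp (by simpa [Function.mem_support] using hφ)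
        have habs : |t / lam ^ i| = |t| / lam ^ i := by
          rw [abs_div, abs_of_pos hpi]
        rw [habs] at h1 h2
        have ht_lo : lam ^ i * lam⁻¹ ≤ |t| := by
          have := (le_div_iff₀ hpi).mp h1
          linarith [this]
        have ht_hi : |t| ≤ r := by
          have := (div_le_iff₀ hpi).mp h2
          rw [hr_eq]; linarith [this]
        have ht_mem : x - t ∈ Set.Icc (x - r) (x + r) := by
          obtain ⟨hta, htb⟩ := abs_le.mp ht_hi
          constructor <;> simp <;> linarith
        have hQt : |Q t| ≤ 64 * p := by
          calc |Q t| ≤ 8 * |a| * |t| ^ k := hQ i hi t hφ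
            _ ≤ 8 * lam ^ (-B + 1) * |t| ^ k := by gcongr; exact hB.2
            _ ≤ 8 * lam ^ (-B + 1) * r ^ k := by
                have h8 : (0:ℝ) ≤ 8 * lam ^ (-B + 1) := by positivity
                exact mul_le_mul_of_nonneg_left (pow_le_pow_left₀ (abs_nonneg t) ht_hi k) h8
            _ = 8 * lam ^ (-B + 1 + (i + 2) * k) := by
                rw [hrdef, ← zpow_natCast (lam ^ (i+2)) k, ← zpow_mul, mul_assoc,
                  ← zpow_add₀ hlampos.ne']
            _ ≤ 64 * p := by
                rw [hzp]
                have he : (((-B + 1 + (i + 2) * k : ℤ)):ℝ) / (k:ℝ)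
                    = ((i:ℝ) - θ) + ((k:ℝ)⁻¹ + 2) := by
                  rw [hθ]; push_cast; field_simp; ring
                rw [he, Real.rpow_add two_pos]
                have h8 : (2:ℝ) ^ ((k:ℝ)⁻¹ + 2) ≤ 8 := by
                  calc (2:ℝ) ^ ((k:ℝ)⁻¹ + 2) ≤ (2:ℝ) ^ (3:ℝ) := by
                        apply Real.rpow_le_rpow_of_exponent_le one_le_two
                        have : (k:ℝ)⁻¹ ≤ 1 := by
                          rw [inv_le_one_iff₀]; right
                          exact_mod_cast (by omega : 1 ≤ k)
                        linarith
                    _ = 8 := by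
                        rw [show (3:ℝ) = ((3:ℕ):ℝ) by norm_num, Real.rpow_natCast]; norm_num
                calc 8 * ((2:ℝ) ^ ((i:ℝ) - θ) * (2:ℝ) ^ ((k:ℝ)⁻¹ + 2))
                    ≤ 8 * (p * 8) := by rw [hpdef]; gcongr
                  _ = 64 * p := by ring
        have hinv : (ENNReal.ofReal |t|)⁻¹ ≤ ENNReal.ofReal (lam / lam ^ i) := by
          have hc : (0:ℝ) < lam ^ i * lam⁻¹ := by positivity
          calc (ENNReal.ofReal |t|)⁻¹ ≤ (ENNReal.ofReal (lam ^ i * lam⁻¹))⁻¹ :=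
                ENNReal.inv_le_inv.mpr (ENNReal.ofReal_le_ofReal ht_lo)
            _ = ENNReal.ofReal ((lam ^ i * lam⁻¹)⁻¹) := (ENNReal.ofReal_inv_of_pos hc).symm
            _ = ENNReal.ofReal (lam / lam ^ i) := by
                congr 1
                rw [mul_inv, inv_inv, div_eq_mul_inv, mul_comm]
        calc (‖f (x - t)‖₊ : ℝ≥0∞) * ENNReal.ofReal (|Q t|) *
              ENNReal.ofReal (φ₀ (t / lam ^ i)) * (ENNReal.ofReal |t|)⁻¹
            ≤ (‖f (x - t)‖₊ : ℝ≥0∞) * ENNReal.ofReal (64 * p) * 1 *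
                ENNReal.ofReal (lam / lam ^ i) := by
              exact mul_le_mul' (mul_le_mul' (mul_le_mul' le_rfl
                (ENNReal.ofReal_le_ofReal hQt)) (ENNReal.ofReal_le_one.mpr (hφ₀01 _).2)) hinv
          _ = ENNReal.ofReal D * (‖f (x - t)‖₊ : ℝ≥0∞) := by
              rw [mul_one, hDdef, ENNReal.ofReal_mul (by positivity : (0:ℝ) ≤ 64 * p),
                mul_comm ((‖f (x - t)‖₊ : ℝ≥0∞)) (ENNReal.ofReal (64 * p)), mul_right_comm]
          _ = ENNReal.ofReal D *
              Set.indicator (Set.Icc (x - r) (x + r)) (fun y => (‖f y‖₊ : ℝ≥0∞)) (x - t) := by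
              rw [Set.indicator_of_mem ht_mem]
    -- integrate
    have hmax : (∫⁻ y in Set.Icc (x - r) (x + r), (‖f y‖₊ : ℝ≥0∞))
        ≤ ENNReal.ofReal (2 * r) * centeredMaximal f x := by
      have h0 : ENNReal.ofReal (2 * r) ≠ 0 := by
        simp [ENNReal.ofReal_eq_zero]; linarith
      have hM : (ENNReal.ofReal (2 * r))⁻¹ * ∫⁻ y in Set.Icc (x - r) (x + r), (‖f y‖₊ : ℝ≥0∞)
          ≤ centeredMaximal f x := by
        unfold centeredMaximal
        exact le_iSup₂ (f := fun (r : ℝ) (_ : 0 < r) =>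
          (ENNReal.ofReal (2 * r))⁻¹ * ∫⁻ y in Set.Icc (x - r) (x + r), (‖f y‖₊ : ℝ≥0∞)) r hr
      calc (∫⁻ y in Set.Icc (x - r) (x + r), (‖f y‖₊ : ℝ≥0∞))
          = ENNReal.ofReal (2 * r) *
              ((ENNReal.ofReal (2 * r))⁻¹ * ∫⁻ y in Set.Icc (x - r) (x + r), (‖f y‖₊ : ℝ≥0∞)) := by
            rw [← mul_assoc, ENNReal.mul_inv_cancel h0 ENNReal.ofReal_ne_top, one_mul]
        _ ≤ ENNReal.ofReal (2 * r) * centeredMaximal f x := mul_le_mul_right hM _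
    have hchange : (∫⁻ t : ℝ,
        Set.indicator (Set.Icc (x - r) (x + r)) (fun y => (‖f y‖₊ : ℝ≥0∞)) (x - t))
        = ∫⁻ y in Set.Icc (x - r) (x + r), (‖f y‖₊ : ℝ≥0∞) := by
      have hmp : MeasurePreserving (fun t : ℝ => x - t) volume volume := by
        have := (measurePreserving_add_left (volume : Measure ℝ) x).comp
          (Measure.measurePreserving_neg volume)
        simpa [Function.comp_def, sub_eq_add_neg] using this
      rw [hmp.lintegral_comp_emb (MeasurableEquiv.subLeft x).measurableEmbedding]
      exact lintegral_indicator measurableSet_Icc _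
    calc (∫⁻ t : ℝ, (‖f (x - t)‖₊ : ℝ≥0∞) * ENNReal.ofReal (|Q t|) *
          ENNReal.ofReal (φ₀ (t / lam ^ i)) * (ENNReal.ofReal |t|)⁻¹)
        ≤ ∫⁻ t : ℝ, ENNReal.ofReal D *
            Set.indicator (Set.Icc (x - r) (x + r)) (fun y => (‖f y‖₊ : ℝ≥0∞)) (x - t) :=
          lintegral_mono hpt
      _ = ENNReal.ofReal D * ∫⁻ t : ℝ,
            Set.indicator (Set.Icc (x - r) (x + r)) (fun y => (‖f y‖₊ : ℝ≥0∞)) (x - t) :=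
          lintegral_const_mul' _ _ ENNReal.ofReal_ne_top
      _ ≤ ENNReal.ofReal D * (ENNReal.ofReal (2 * r) * centeredMaximal f x) := by
          rw [hchange]; exact mul_le_mul_right hmax _
      _ ≤ ENNReal.ofReal p * (ENNReal.ofReal 256 * centeredMaximal f x) := by
          rw [← mul_assoc, ← mul_assoc, ← ENNReal.ofReal_mul hD0,
            ← ENNReal.ofReal_mul (by positivity)]
          apply mul_le_mul_left
          apply ENNReal.ofReal_le_ofReal
          have hcancel : D * (2 * r) = 128 * p * lam ^ 3 := by
            rw [hDdef, hr_eq]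
            field_simp
            ring
          rw [hcancel]
          nlinarith [hp.le, hlamk, hlam1]
  have hsum : (∑' i : ℤ, (if (i:ℝ) ≤ θ then ENNReal.ofReal ((2:ℝ) ^ ((i:ℝ) - θ)) else 0)) ≤ 2 := by
      set g : ℤ → ℝ≥0∞ := fun i => if (i:ℝ) ≤ θ then ENNReal.ofReal ((2:ℝ) ^ ((i:ℝ) - θ)) else 0 with hg
      set m : ℤ := ⌊θ⌋ with hm
      have hmθ : (m:ℝ) ≤ θ := Int.floor_le θ
      have hinj : Function.Injective (fun n : ℕ => m - (n:ℤ)) := by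
        intro a b h; simp only [sub_right_inj, Int.natCast_inj] at h; omega
      have hsupp : Function.support g ⊆ Set.range (fun n : ℕ => m - (n:ℤ)) := by
        intro i hi
        have hle : (i:ℝ) ≤ θ := by
          by_contra h; exact hi (by simp [hg, h])
        have him : i ≤ m := Int.le_floor.mpr hle
        exact ⟨(m - i).toNat, by simp; omega⟩
      rw [← hinj.tsum_eq hsupp]
      have hterm : ∀ n : ℕ, g (m - n) ≤ (2⁻¹ : ℝ≥0∞) ^ n := by
        intro n
        have h1 : (((m - n : ℤ)):ℝ) ≤ θ := by
          push_cast
          have : (0:ℝ) ≤ (n:ℝ) := Nat.cast_nonneg n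
          linarith
        have h2 : (2:ℝ) ^ ((((m - n : ℤ)):ℝ) - θ) ≤ (2:ℝ) ^ (-(n:ℝ)) := by
          apply Real.rpow_le_rpow_of_exponent_le one_le_two
          push_cast; linarith
        calc g (m - n) = ENNReal.ofReal ((2:ℝ) ^ ((((m - n : ℤ)):ℝ) - θ)) := by
              simp only [hg]; rw [if_pos h1]
          _ ≤ ENNReal.ofReal ((2:ℝ) ^ (-(n:ℝ))) := ENNReal.ofReal_le_ofReal h2
          _ = (2⁻¹ : ℝ≥0∞) ^ n := by
              rw [Real.rpow_neg (by norm_num), Real.rpow_natCast,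
                ENNReal.ofReal_inv_of_pos (by positivity), ← ENNReal.inv_pow]
              congr 1
              rw [ENNReal.ofReal_pow (by norm_num)]
              norm_num
      calc (∑' n : ℕ, g (m - n)) ≤ ∑' n : ℕ, (2⁻¹ : ℝ≥0∞) ^ n :=
            ENNReal.tsum_le_tsum hterm
        _ = 2 := by
            rw [ENNReal.tsum_geometric, ENNReal.one_sub_inv_two, inv_inv]
  calc (∑' i : ℤ,
        if (i : ℝ) ≤ θ then
          ∫⁻ t : ℝ, (‖f (x - t)‖₊ : ℝ≥0∞) * ENNReal.ofReal (|Q t|) *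
            ENNReal.ofReal (φ₀ (t / lam ^ i)) * (ENNReal.ofReal |t|)⁻¹
        else 0)
      ≤ ∑' i : ℤ, (if (i:ℝ) ≤ θ then ENNReal.ofReal ((2:ℝ) ^ ((i:ℝ) - θ)) else 0) *
          (ENNReal.ofReal 256 * centeredMaximal f x) := by
        apply ENNReal.tsum_le_tsum
        intro i
        by_cases hi : (i:ℝ) ≤ θ
        · rw [if_pos hi, if_pos hi]
          exact key i hi
        · rw [if_neg hi, if_neg hi, zero_mul]
    _ = (∑' i : ℤ, (if (i:ℝ) ≤ θ then ENNReal.ofReal ((2:ℝ) ^ ((i:ℝ) - θ)) else 0)) *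
          (ENNReal.ofReal 256 * centeredMaximal f x) := ENNReal.tsum_mul_right
    _ ≤ 2 * (ENNReal.ofReal 256 * centeredMaximal f x) := mul_le_mul_left hsum _
    _ ≤ 10 ^ 4 * centeredMaximal f x := by
        rw [← mul_assoc]
        apply mul_le_mul_left
        have h2 : (2 : ℝ≥0∞) * ENNReal.ofReal 256 = ENNReal.ofReal 512 := by
          rw [show (2 : ℝ≥0∞) = ENNReal.ofReal 2 by simp,
            ← ENNReal.ofReal_mul (by norm_num)]
          norm_num
        rw [h2]
        calc ENNReal.ofReal 512 ≤ ENNReal.ofReal 10000 := ENNReal.ofReal_le_ofReal (by norm_num)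
          _ = 10 ^ 4 := by
            rw [show ((10:ℝ≥0∞) ^ 4) = ((10000 : ℕ) : ℝ≥0∞) by norm_num]
            simp
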